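/- arXiv:1505.02484 — 2 statements merged into one kernel-verified Lean document; each statement's English description precedes it below -/
import Mathlib

section
/- For all vertices u and v of G and with q_last and q_0 as defined, the probability that two independent simple random walks started at u have their last collision at v satisfies q_last(u, v) = Σ_{n≥0} p_n(u, v)^2 · q_0(v). -/
open MeasureTheory
open scoped ENNReal Classical

namespace CollisionsStmt

variable {V : Type*}

/-- One-step transition probabilities of the simple random walk on `G`:
`p(u,v) = 1/deg u` if `v` is adjacent to `u`, and `0` otherwise. -/
noncomputable def step (G : SimpleGraph V) [G.LocallyFinite] (u v : V) : ℝ≥0∞ :=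
  if G.Adj u v then ((G.degree u : ℝ≥0∞))⁻¹ else 0

/-- The `n`-step transition probabilities of the simple random walk on `G`. -/
noncomputable def pn (G : SimpleGraph V) [G.LocallyFinite] : ℕ → V → V → ℝ≥0∞
  | 0, u, v => if u = v then 1 else 0
  | n + 1, u, v => ∑' w, step G u w * pn G n w v

/-- `μ` is the law (on path space, via the Ionescu–Tulcea trajectory construction) of
two independent walks with one-step transition probabilities `p`, started at `a` and `b`
respectively; equivalently, the Markov chain on `V × V` with kernel `p ⊗ p` started at `(a, b)`.
The law is characterized by being a probability measure with the prescribed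
finite-dimensional (cylinder) distributions. -/
def IsPairWalkMeasure [MeasurableSpace V] (p : V → V → ℝ≥0∞) (a b : V)
    (μ : Measure (ℕ → V × V)) : Prop :=
  IsProbabilityMeasure μ ∧
    ∀ (n : ℕ) (x : ℕ → V × V),
      μ {ω | ∀ i ≤ n, ω i = x i} =
        (if x 0 = (a, b) then (1 : ℝ≥0∞) else 0) *
          ∏ i ∈ Finset.range n, (p (x i).1 (x (i + 1)).1 * p (x i).2 (x (i + 1)).2)

/-- The event that the two walks do not collide at any time `n ≥ 1`. -/
def noCollision : Set (ℕ → V × V) := {ω | ∀ n ≥ 1, (ω n).1 ≠ (ω n).2}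

/-- The event that the two walks have their last collision at the vertex `v`: for some
`n ≥ 0`, `X_n = Y_n = v` and `X_m ≠ Y_m` for all `m > n`. -/
def lastCollisionAt (v : V) : Set (ℕ → V × V) :=
  {ω | ∃ n : ℕ, ω n = (v, v) ∧ ∀ m > n, (ω m).1 ≠ (ω m).2}

/-- The event that the two walks collide at only finitely many times. -/
def finCollisions : Set (ℕ → V × V) := {ω | {n : ℕ | (ω n).1 = (ω n).2}.Finite}

/-- The event that the two walks collide at infinitely many times. -/
def infCollisions : Set (ℕ → V × V) := {ω | {n : ℕ | (ω n).1 = (ω n).2}.Infinite}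

/-- The event that the two walks never collide (including at time `0`). -/
def neverCollide : Set (ℕ → V × V) := {ω | ∀ n : ℕ, (ω n).1 ≠ (ω n).2}

section Aux

variable {A : Type*}

/-- weight of a finite path -/
noncomputable def Wt (k : A → A → ℝ≥0∞) (N : ℕ) (x : Fin (N + 1) → A) : ℝ≥0∞ :=
  ∏ i : Fin N, k (x i.castSucc) (x i.succ)

lemma Wt_zero (k : A → A → ℝ≥0∞) (x : Fin 1 → A) : Wt k 0 x = 1 := by
  simp [Wt]

lemma Wt_cons (k : A → A → ℝ≥0∞) (N : ℕ) (a : A) (y : Fin (N + 1) → A) :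
    Wt k (N + 1) (Fin.cons a y) = k a (y 0) * Wt k N y := by
  unfold Wt
  rw [Fin.prod_univ_succ]
  have h : ∀ i : Fin N,
      k ((Fin.cons a y : Fin (N+1+1) → A) (i.succ).castSucc)
        ((Fin.cons a y : Fin (N+1+1) → A) i.succ.succ)
      = k (y i.castSucc) (y i.succ) := fun i => by
    rw [← Fin.succ_castSucc, Fin.cons_succ, Fin.cons_succ]
  rw [Finset.prod_congr rfl fun i _ => h i]
  congr 1

lemma tsum_ite_one (u : A) (g : A → ℝ≥0∞) :
    ∑' a, (if a = u then (1 : ℝ≥0∞) else 0) * g a = g u := by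
  rw [tsum_eq_single u]
  · simp
  · intro b hb; simp [hb]

lemma tsum_insert_eq {B : Type*} (h : B → A) (f : B → ℝ≥0∞) :
    ∑' y, f y = ∑' (w : A), ∑' y, (if h y = w then (1 : ℝ≥0∞) else 0) * f y := by
  rw [ENNReal.tsum_comm]
  refine tsum_congr fun y => ?_
  rw [tsum_eq_single (h y)]
  · simp
  · intro b hb; simp [hb.symm]

def Cyl {A : Type*} (N : ℕ) (c : Fin (N + 1) → A) : Set (ℕ → A) :=
  {ω | ∀ i : Fin (N + 1), ω (i : ℕ) = c i}

lemma measurableSet_cyl {A : Type*} [MeasurableSpace A] [MeasurableSingletonClass A]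
    {N : ℕ} (c : Fin (N + 1) → A) : MeasurableSet (Cyl N c) := by
  have : Cyl N c = ⋂ i : Fin (N + 1), (fun ω : ℕ → A => ω (i : ℕ)) ⁻¹' {c i} := by
    ext ω; simp [Cyl, Set.mem_iInter]
  rw [this]
  exact MeasurableSet.iInter fun i => (measurable_pi_apply _) (measurableSet_singleton _)

lemma measure_restrict {A : Type*} [MeasurableSpace A] [MeasurableSingletonClass A]
    [Countable A] (μ : Measure (ℕ → A)) (N : ℕ) (T : Set (Fin (N + 1) → A)) :
    μ {ω | (fun i : Fin (N + 1) => ω (i : ℕ)) ∈ T} =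
      ∑' c : T, μ (Cyl N (c : Fin (N + 1) → A)) := by
  have h : {ω : ℕ → A | (fun i : Fin (N + 1) => ω (i : ℕ)) ∈ T} =
      ⋃ c : T, Cyl N (c : Fin (N + 1) → A) := by
    ext ω
    constructor
    · intro hω
      exact Set.mem_iUnion.2 ⟨⟨fun i => ω (i : ℕ), hω⟩, fun i => rfl⟩
    · intro hω
      obtain ⟨c, hc⟩ := Set.mem_iUnion.1 hω
      have : (fun i : Fin (N + 1) => ω (i : ℕ)) = (c : Fin (N + 1) → A) :=
        funext fun i => hc i
      show (fun i : Fin (N + 1) => ω (i : ℕ)) ∈ T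
      rw [this]; exact c.2
  rw [h, measure_iUnion]
  · intro c d hcd
    refine Set.disjoint_left.2 fun ω h1 h2 => hcd ?_
    exact Subtype.ext (funext fun i => (h1 i).symm.trans (h2 i))
  · exact fun c => measurableSet_cyl _

def extF {A : Type*} (N : ℕ) (c : Fin (N + 1) → A) : ℕ → A :=
  fun i => c ⟨min i N, by omega⟩

end Aux

noncomputable def ker (G : SimpleGraph V) [G.LocallyFinite] (a b : V × V) : ℝ≥0∞ :=
  step G a.1 b.1 * step G a.2 b.2

lemma cyl_measure (G : SimpleGraph V) [G.LocallyFinite] [MeasurableSpace V]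
    (w : V) (μ : Measure (ℕ → V × V)) (hμ : IsPairWalkMeasure (step G) w w μ)
    (N : ℕ) (c : Fin (N + 1) → V × V) :
    μ (Cyl N c) = (if c 0 = (w, w) then (1 : ℝ≥0∞) else 0) * Wt (ker G) N c := by
  have h := hμ.2 N (extF N c)
  have hset : {ω : ℕ → V × V | ∀ i ≤ N, ω i = extF N c i} = Cyl N c := by
    ext ω
    constructor
    · intro hω i
      have := hω (i : ℕ) (by omega)
      rw [this]
      show c ⟨min (i : ℕ) N, _⟩ = c i
      congr 1
      exact Fin.ext (by simp [Nat.min_eq_left (by omega : (i : ℕ) ≤ N)])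
    · intro hω i hi
      have h1 : extF N c i = c ⟨i, by omega⟩ := by
        show c ⟨min i N, _⟩ = c ⟨i, _⟩
        congr 1
        exact Fin.ext (by simp [Nat.min_eq_left hi])
      rw [h1, ← hω ⟨i, by omega⟩]
  rw [hset] at h
  rw [h]
  refine congrArg₂ (· * ·) ?_ ?_
  · have h0 : extF N c 0 = c 0 := by
      show c ⟨min 0 N, _⟩ = c 0
      congr 1
    rw [h0]
  · rw [Finset.prod_range]
    refine Finset.prod_congr rfl fun i _ => ?_
    have h1 : extF N c (i : ℕ) = c i.castSucc := by
      show c ⟨min (i : ℕ) N, _⟩ = c i.castSucc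
      congr 1
      exact Fin.ext (by simp [Nat.min_eq_left (by omega : (i : ℕ) ≤ N)])
    have h2 : extF N c ((i : ℕ) + 1) = c i.succ := by
      show c ⟨min ((i : ℕ) + 1) N, _⟩ = c i.succ
      congr 1
      exact Fin.ext (by simp [Nat.min_eq_left (by omega : (i : ℕ) + 1 ≤ N)])
    rw [h1, h2]
    rfl

lemma chapman (G : SimpleGraph V) [G.LocallyFinite] [Countable V] (n : ℕ) (u v : V) :
    ∑' x : Fin (n + 1) → V,
      (if x 0 = u then (1 : ℝ≥0∞) else 0) * (if x (Fin.last n) = v then 1 else 0)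
        * Wt (step G) n x = pn G n u v := by
  induction n generalizing u with
  | zero =>
    rw [← (Equiv.funUnique (Fin 1) V).symm.tsum_eq]
    have : ∀ a : V, ((Equiv.funUnique (Fin 1) V).symm a : Fin 1 → V) = fun _ => a :=
      fun a => rfl
    simp only [this]
    rw [tsum_eq_single u]
    · simp [Wt_zero, pn]
    · intro b hb; simp [hb]
  | succ n ih =>
    rw [← (Fin.consEquiv (fun _ : Fin (n + 2) => V)).tsum_eq, ENNReal.tsum_prod']
    have hc : ∀ (a : V) (y : Fin (n + 1) → V),
        ((Fin.consEquiv (fun _ : Fin (n + 2) => V)) (a, y) : Fin (n + 2) → V)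
          = Fin.cons a y := fun a y => rfl
    simp only [hc]
    have hterm : ∀ (a : V) (y : Fin (n + 1) → V),
        (if (Fin.cons a y : Fin (n + 2) → V) 0 = u then (1 : ℝ≥0∞) else 0) *
            (if (Fin.cons a y : Fin (n + 2) → V) (Fin.last (n + 1)) = v then 1 else 0)
            * Wt (step G) (n + 1) (Fin.cons a y)
          = (if a = u then (1 : ℝ≥0∞) else 0) *
              ((if y (Fin.last n) = v then 1 else 0) * (step G a (y 0) * Wt (step G) n y)) := by
      intro a y
      rw [Wt_cons]
      have h1 : (Fin.cons a y : Fin (n + 2) → V) 0 = a := rfl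
      have h2 : (Fin.cons a y : Fin (n + 2) → V) (Fin.last (n + 1)) = y (Fin.last n) := by
        rw [← Fin.succ_last, Fin.cons_succ]
      rw [h1, h2]; ring
    simp only [hterm]
    have hfac : ∀ a : V,
        ∑' y : Fin (n + 1) → V, (if a = u then (1 : ℝ≥0∞) else 0) *
          ((if y (Fin.last n) = v then 1 else 0) * (step G a (y 0) * Wt (step G) n y))
        = (if a = u then (1 : ℝ≥0∞) else 0) *
          ∑' y : Fin (n + 1) → V,
            (if y (Fin.last n) = v then 1 else 0) * (step G a (y 0) * Wt (step G) n y) :=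
      fun a => ENNReal.tsum_mul_left
    simp only [hfac]
    rw [tsum_ite_one u]
    rw [tsum_insert_eq (fun y : Fin (n + 1) → V => y 0)]
    have hrepl : ∀ (w : V) (y : Fin (n + 1) → V),
        (if y 0 = w then (1 : ℝ≥0∞) else 0) *
          ((if y (Fin.last n) = v then 1 else 0) * (step G u (y 0) * Wt (step G) n y))
        = step G u w * ((if y 0 = w then (1 : ℝ≥0∞) else 0) *
            (if y (Fin.last n) = v then 1 else 0) * Wt (step G) n y) := by
      intro w y
      by_cases h : y 0 = w
      · rw [h]; ring
      · simp [h]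
    simp only [hrepl]
    have : ∀ w : V,
        ∑' y : Fin (n + 1) → V, step G u w * ((if y 0 = w then (1 : ℝ≥0∞) else 0) *
            (if y (Fin.last n) = v then 1 else 0) * Wt (step G) n y)
        = step G u w * pn G n w v := by
      intro w
      rw [ENNReal.tsum_mul_left, ih w]
    simp only [this]
    rfl

lemma chapman2 (G : SimpleGraph V) [G.LocallyFinite] [Countable V] (n : ℕ) (u v : V) :
    ∑' x : Fin (n + 1) → V × V,
      (if x 0 = (u, u) then (1 : ℝ≥0∞) else 0) * (if x (Fin.last n) = (v, v) then 1 else 0)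
        * Wt (ker G) n x = pn G n u v * pn G n u v := by
  rw [← (Equiv.arrowProdEquivProdArrow (Fin (n + 1)) (fun _ => V) (fun _ => V)).symm.tsum_eq, ENNReal.tsum_prod']
  have he : ∀ (p q : Fin (n + 1) → V),
      ((Equiv.arrowProdEquivProdArrow (Fin (n + 1)) (fun _ => V) (fun _ => V)).symm (p, q) : Fin (n + 1) → V × V)
        = fun i => (p i, q i) := fun p q => rfl
  simp only [he]
  have hterm : ∀ (p q : Fin (n + 1) → V),
      (if (fun i : Fin (n + 1) => (p i, q i)) 0 = (u, u) then (1 : ℝ≥0∞) else 0) *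
          (if (fun i : Fin (n + 1) => (p i, q i)) (Fin.last n) = (v, v) then 1 else 0)
          * Wt (ker G) n (fun i => (p i, q i))
        = ((if p 0 = u then (1 : ℝ≥0∞) else 0) * (if p (Fin.last n) = v then 1 else 0)
            * Wt (step G) n p) *
          ((if q 0 = u then (1 : ℝ≥0∞) else 0) * (if q (Fin.last n) = v then 1 else 0)
            * Wt (step G) n q) := by
    intro p q
    have hw : Wt (ker G) n (fun i => (p i, q i)) = Wt (step G) n p * Wt (step G) n q := by
      unfold Wt ker
      rw [← Finset.prod_mul_distrib]
    rw [hw]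
    have h1 : (if (p 0, q 0) = (u, u) then (1 : ℝ≥0∞) else 0)
        = (if p 0 = u then (1 : ℝ≥0∞) else 0) * (if q 0 = u then 1 else 0) := by
      by_cases h : p 0 = u <;> by_cases h' : q 0 = u <;> simp [h, h', Prod.ext_iff]
    have h2 : (if (p (Fin.last n), q (Fin.last n)) = (v, v) then (1 : ℝ≥0∞) else 0)
        = (if p (Fin.last n) = v then (1 : ℝ≥0∞) else 0)
          * (if q (Fin.last n) = v then 1 else 0) := by
      by_cases h : p (Fin.last n) = v <;> by_cases h' : q (Fin.last n) = v <;>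
        simp [h, h', Prod.ext_iff]
    show (if (p 0, q 0) = (u, u) then (1 : ℝ≥0∞) else 0) *
        (if (p (Fin.last n), q (Fin.last n)) = (v, v) then 1 else 0) *
        (Wt (step G) n p * Wt (step G) n q) = _
    rw [h1, h2]; ring
  simp only [hterm]
  rw [← chapman G n u v]
  rw [← ENNReal.tsum_mul_right]
  refine tsum_congr fun p => ?_
  rw [← ENNReal.tsum_mul_left]

/-- sum over collision-free paths of length `k` started at `(v,v)` -/
noncomputable def Z (G : SimpleGraph V) [G.LocallyFinite] (v : V) (k : ℕ) : ℝ≥0∞ :=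
  ∑' z : Fin (k + 1) → V × V,
    (if z 0 = (v, v) then (1 : ℝ≥0∞) else 0) *
      (if ∀ m : Fin (k + 1), 0 < (m : ℕ) → (z m).1 ≠ (z m).2 then 1 else 0) *
      Wt (ker G) k z

lemma main_sum (G : SimpleGraph V) [G.LocallyFinite] [Countable V] (v : V) :
    ∀ (n M : ℕ) (hnM : n ≤ M), ∀ a b : V,
    ∑' x : Fin (M + 1) → V × V,
      (if x 0 = (a, b) then (1 : ℝ≥0∞) else 0) *
        (if x ⟨n, by omega⟩ = (v, v) then 1 else 0) *
        (if ∀ m : Fin (M + 1), n < (m : ℕ) → (x m).1 ≠ (x m).2 then 1 else 0) *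
        Wt (ker G) M x
    = pn G n a v * pn G n b v * Z G v (M - n) := by
  intro n
  induction n with
  | zero =>
    intro M h a b
    have hz : (⟨0, by omega⟩ : Fin (M + 1)) = 0 := by
      exact Fin.ext (by simp)
    by_cases hab : (a, b) = ((v : V), (v : V))
    · have ha : a = v := congrArg Prod.fst hab
      have hb : b = v := congrArg Prod.snd hab
      rw [hab, ha, hb]
      have hpn : pn G 0 v v = 1 := by simp [pn]
      rw [hpn, one_mul, one_mul, Nat.sub_zero]
      unfold Z
      refine tsum_congr fun x => ?_
      rw [hz]
      by_cases h0 : x 0 = (v, v) <;> simp [h0, mul_assoc]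
    · have hnvv : ¬(a = v ∧ b = v) := fun ⟨h1, h2⟩ => hab (by rw [h1, h2])
      have h0 : pn G 0 a v * pn G 0 b v = 0 := by
        simp only [pn]
        by_cases ha : a = v
        · by_cases hb : b = v
          · exact absurd ⟨ha, hb⟩ hnvv
          · simp [hb]
        · simp [ha]
      rw [h0, zero_mul]
      refine (tsum_congr fun x => ?_).trans tsum_zero
      rw [hz]
      by_cases hx : x 0 = (a, b)
      · have hne : x 0 ≠ (v, v) := by rw [hx]; exact fun hc => hab hc
        rw [if_neg hne]
        simp
      · simp [hx]
  | succ n ih =>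
    intro M h a b
    obtain ⟨M', rfl⟩ : ∃ M', M = M' + 1 := ⟨M - 1, by omega⟩
    have hn' : n ≤ M' := by omega
    rw [← (Fin.consEquiv (fun _ : Fin (M' + 1 + 1) => V × V)).tsum_eq, ENNReal.tsum_prod']
    have he : ∀ (c : V × V) (y : Fin (M' + 1) → V × V),
        ((Fin.consEquiv (fun _ : Fin (M' + 1 + 1) => V × V)) (c, y) : Fin (M' + 1 + 1) → V × V)
          = Fin.cons c y := fun c y => rfl
    simp only [he]
    have hiff : ∀ (c : V × V) (y : Fin (M' + 1) → V × V),
        (∀ m : Fin (M' + 1 + 1), n + 1 < (m : ℕ) →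
            ((Fin.cons c y : Fin (M' + 1 + 1) → V × V) m).1
              ≠ ((Fin.cons c y : Fin (M' + 1 + 1) → V × V) m).2)
          ↔ (∀ j : Fin (M' + 1), n < (j : ℕ) → (y j).1 ≠ (y j).2) := by
      intro c y
      constructor
      · intro hh j hj
        have := hh j.succ (by rw [Fin.val_succ]; omega)
        rwa [Fin.cons_succ] at this
      · intro hh m hm
        induction m using Fin.cases with
        | zero => simp at hm
        | succ j =>
          rw [Fin.cons_succ]
          exact hh j (by rw [Fin.val_succ] at hm; omega)
    have hterm : ∀ (c : V × V) (y : Fin (M' + 1) → V × V),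
        (if (Fin.cons c y : Fin (M' + 1 + 1) → V × V) 0 = (a, b) then (1 : ℝ≥0∞) else 0) *
            (if (Fin.cons c y : Fin (M' + 1 + 1) → V × V) ⟨n + 1, by omega⟩ = (v, v)
              then 1 else 0) *
            (if ∀ m : Fin (M' + 1 + 1), n + 1 < (m : ℕ) →
                ((Fin.cons c y : Fin (M' + 1 + 1) → V × V) m).1
                  ≠ ((Fin.cons c y : Fin (M' + 1 + 1) → V × V) m).2 then 1 else 0) *
            Wt (ker G) (M' + 1) (Fin.cons c y)
          = (if c = (a, b) then (1 : ℝ≥0∞) else 0) *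
              ((if y ⟨n, by omega⟩ = (v, v) then 1 else 0) *
                (if ∀ j : Fin (M' + 1), n < (j : ℕ) → (y j).1 ≠ (y j).2 then 1 else 0) *
                (ker G c (y 0) * Wt (ker G) M' y)) := by
      intro c y
      rw [Wt_cons]
      have h1 : (Fin.cons c y : Fin (M' + 1 + 1) → V × V) 0 = c := rfl
      have h2 : (Fin.cons c y : Fin (M' + 1 + 1) → V × V) ⟨n + 1, by omega⟩
          = y ⟨n, by omega⟩ := by
        rw [show (⟨n + 1, by omega⟩ : Fin (M' + 1 + 1)) = Fin.succ ⟨n, by omega⟩ from rfl,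
          Fin.cons_succ]
      rw [h1, h2, if_congr (hiff c y) rfl rfl]
      ring
    simp only [hterm]
    have hfac : ∀ c : V × V,
        ∑' y : Fin (M' + 1) → V × V, (if c = (a, b) then (1 : ℝ≥0∞) else 0) *
          ((if y ⟨n, by omega⟩ = (v, v) then 1 else 0) *
            (if ∀ j : Fin (M' + 1), n < (j : ℕ) → (y j).1 ≠ (y j).2 then 1 else 0) *
            (ker G c (y 0) * Wt (ker G) M' y))
        = (if c = (a, b) then (1 : ℝ≥0∞) else 0) *
          ∑' y : Fin (M' + 1) → V × V,
            ((if y ⟨n, by omega⟩ = (v, v) then 1 else 0) *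
              (if ∀ j : Fin (M' + 1), n < (j : ℕ) → (y j).1 ≠ (y j).2 then 1 else 0) *
              (ker G c (y 0) * Wt (ker G) M' y)) := fun c => ENNReal.tsum_mul_left
    simp only [hfac]
    rw [tsum_eq_single ((a, b) : V × V) (fun c hc => by simp [hc]), if_pos rfl, one_mul]
    rw [tsum_insert_eq (fun y : Fin (M' + 1) → V × V => y 0)]
    have hrepl : ∀ (w : V × V) (y : Fin (M' + 1) → V × V),
        (@ite ℝ≥0∞ (y 0 = w) (Classical.propDecidable _) 1 0) *
          ((if y ⟨n, by omega⟩ = (v, v) then 1 else 0) *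
            (if ∀ j : Fin (M' + 1), n < (j : ℕ) → (y j).1 ≠ (y j).2 then 1 else 0) *
            (ker G (a, b) (y 0) * Wt (ker G) M' y))
        = ker G (a, b) w * ((if y 0 = (w.1, w.2) then (1 : ℝ≥0∞) else 0) *
            (if y ⟨n, by omega⟩ = (v, v) then 1 else 0) *
            (if ∀ j : Fin (M' + 1), n < (j : ℕ) → (y j).1 ≠ (y j).2 then 1 else 0) *
            Wt (ker G) M' y) := by
      intro w y
      by_cases hw : y 0 = w
      · rw [hw, Prod.mk.eta]
        simp only [eq_self_iff_true, if_true]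
        ring
      · simp [hw, Prod.mk.eta]
    beta_reduce
    simp only [hrepl]
    have hin : ∀ w : V × V,
        ∑' y : Fin (M' + 1) → V × V, ker G (a, b) w *
          ((if y 0 = (w.1, w.2) then (1 : ℝ≥0∞) else 0) *
            (if y ⟨n, by omega⟩ = (v, v) then 1 else 0) *
            (if ∀ j : Fin (M' + 1), n < (j : ℕ) → (y j).1 ≠ (y j).2 then 1 else 0) *
            Wt (ker G) M' y)
        = ker G (a, b) w * (pn G n w.1 v * pn G n w.2 v * Z G v (M' - n)) := by
      intro w
      rw [ENNReal.tsum_mul_left, ih M' hn' w.1 w.2]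
    simp only [hin]
    rw [ENNReal.tsum_prod']
    have hfin : ∀ w1 : V,
        ∑' w2 : V, ker G (a, b) (w1, w2) *
            (pn G n (w1, w2).1 v * pn G n (w1, w2).2 v * Z G v (M' - n))
        = (step G a w1 * pn G n w1 v) *
            ((∑' w2 : V, step G b w2 * pn G n w2 v) * Z G v (M' - n)) := by
      intro w1
      have hpt : ∀ w2 : V, ker G (a, b) (w1, w2) *
            (pn G n (w1, w2).1 v * pn G n (w1, w2).2 v * Z G v (M' - n))
          = (step G a w1 * pn G n w1 v) *
              ((step G b w2 * pn G n w2 v) * Z G v (M' - n)) := by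
        intro w2
        show (step G a w1 * step G b w2) * (pn G n w1 v * pn G n w2 v * Z G v (M' - n)) = _
        ring
      rw [tsum_congr hpt, ENNReal.tsum_mul_left, ENNReal.tsum_mul_right]
    simp only [hfin]
    rw [ENNReal.tsum_mul_right]
    have hp1 : ∑' w1 : V, step G a w1 * pn G n w1 v = pn G (n + 1) a v := rfl
    have hp2 : ∑' w2 : V, step G b w2 * pn G n w2 v = pn G (n + 1) b v := rfl
    rw [hp1, hp2]
    have : M' + 1 - (n + 1) = M' - n := by omega
    rw [this]
    ring

lemma step_tsum (G : SimpleGraph V) [G.LocallyFinite] (hdeg : ∀ x : V, 0 < G.degree x)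
    (u : V) : ∑' w, step G u w = 1 := by
  rw [tsum_eq_sum (s := G.neighborFinset u)
    (fun b hb => by simp [step, (SimpleGraph.mem_neighborFinset G u b).not.1 hb])]
  have : ∀ w ∈ G.neighborFinset u, step G u w = ((G.degree u : ℝ≥0∞))⁻¹ := by
    intro w hw
    simp [step, (SimpleGraph.mem_neighborFinset G u w).1 hw]
  rw [Finset.sum_congr rfl this, Finset.sum_const, ← SimpleGraph.card_neighborFinset_eq_degree,
    nsmul_eq_mul]
  rw [SimpleGraph.card_neighborFinset_eq_degree]
  exact ENNReal.mul_inv_cancel (by exact_mod_cast (hdeg u).ne') (ENNReal.natCast_ne_top _)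

lemma pn_le_one (G : SimpleGraph V) [G.LocallyFinite] [Countable V]
    (hdeg : ∀ x : V, 0 < G.degree x) : ∀ (n : ℕ) (u v : V), pn G n u v ≤ 1 := by
  intro n
  induction n with
  | zero =>
    intro u v
    rw [show pn G 0 u v = if u = v then 1 else 0 from rfl]
    by_cases h : u = v
    · rw [if_pos h]
    · rw [if_neg h]; exact zero_le_one
  | succ n ih =>
    intro u v
    show ∑' w, step G u w * pn G n w v ≤ 1
    calc ∑' w, step G u w * pn G n w v ≤ ∑' w, step G u w * 1 :=
          ENNReal.tsum_le_tsum fun w => mul_le_mul_right (ih w v) _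
      _ = 1 := by
          rw [tsum_congr fun w => mul_one (step G u w)]
          exact step_tsum G hdeg u

def NCset (k : ℕ) : Set (ℕ → V × V) := {ω | ∀ m : ℕ, 0 < m → m ≤ k → (ω m).1 ≠ (ω m).2}

def Cset (v : V) (n k : ℕ) : Set (ℕ → V × V) :=
  {ω | ω n = (v, v) ∧ ∀ m : ℕ, n < m → m ≤ n + k → (ω m).1 ≠ (ω m).2}

def Aset (v : V) (n : ℕ) : Set (ℕ → V × V) :=
  {ω | ω n = (v, v) ∧ ∀ m : ℕ, n < m → (ω m).1 ≠ (ω m).2}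

section Meas

variable [Countable V] [MeasurableSpace V] [DiscreteMeasurableSpace V]

lemma measurableSet_coord (m : ℕ) (S : Set (V × V)) :
    MeasurableSet {ω : ℕ → V × V | ω m ∈ S} :=
  measurable_pi_apply m (Set.to_countable S).measurableSet

lemma measurableSet_NCset (k : ℕ) : MeasurableSet (NCset (V := V) k) := by
  have : NCset (V := V) k =
      ⋂ m : ℕ, {ω : ℕ → V × V | ω m ∈ {p : V × V | 0 < m → m ≤ k → p.1 ≠ p.2}} := by
    ext ω; simp [NCset, Set.mem_iInter]
  rw [this]
  exact MeasurableSet.iInter fun m => measurableSet_coord m _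

lemma measurableSet_Cset (v : V) (n k : ℕ) : MeasurableSet (Cset v n k) := by
  have : Cset v n k = {ω : ℕ → V × V | ω n ∈ ({(v, v)} : Set (V × V))} ∩
      ⋂ m : ℕ, {ω : ℕ → V × V | ω m ∈ {p : V × V | n < m → m ≤ n + k → p.1 ≠ p.2}} := by
    ext ω; simp [Cset, Set.mem_iInter]
  rw [this]
  exact (measurableSet_coord n _).inter (MeasurableSet.iInter fun m => measurableSet_coord m _)

lemma measurableSet_Aset (v : V) (n : ℕ) : MeasurableSet (Aset v n) := by
  have : Aset v n = {ω : ℕ → V × V | ω n ∈ ({(v, v)} : Set (V × V))} ∩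
      ⋂ m : ℕ, {ω : ℕ → V × V | ω m ∈ {p : V × V | n < m → p.1 ≠ p.2}} := by
    ext ω; simp [Aset, Set.mem_iInter]
  rw [this]
  exact (measurableSet_coord n _).inter (MeasurableSet.iInter fun m => measurableSet_coord m _)

lemma NCset_eq_Z (G : SimpleGraph V) [G.LocallyFinite] (v : V)
    (μ : Measure (ℕ → V × V)) (hμ : IsPairWalkMeasure (step G) v v μ) (k : ℕ) :
    μ (NCset k) = Z G v k := by
  have hT : NCset (V := V) k = {ω : ℕ → V × V | (fun i : Fin (k + 1) => ω (i : ℕ)) ∈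
      {z : Fin (k + 1) → V × V | ∀ m : Fin (k + 1), 0 < (m : ℕ) → (z m).1 ≠ (z m).2}} := by
    ext ω
    constructor
    · intro hω m hm
      exact hω (m : ℕ) hm (by omega)
    · intro hω m hm hk
      exact hω ⟨m, by omega⟩ hm
  have h2 : ∑' c : ↑{z : Fin (k + 1) → V × V | ∀ m : Fin (k + 1), 0 < (m : ℕ) → (z m).1 ≠ (z m).2},
      μ (Cyl k (c : Fin (k + 1) → V × V))
      = ∑' c : ↑{z : Fin (k + 1) → V × V | ∀ m : Fin (k + 1), 0 < (m : ℕ) → (z m).1 ≠ (z m).2},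
        ((if (c : Fin (k + 1) → V × V) 0 = (v, v) then (1 : ℝ≥0∞) else 0) *
          Wt (ker G) k (c : Fin (k + 1) → V × V)) :=
    tsum_congr fun c => cyl_measure G v μ hμ k c
  rw [hT, measure_restrict, h2,
    tsum_subtype {z : Fin (k + 1) → V × V | ∀ m : Fin (k + 1), 0 < (m : ℕ) → (z m).1 ≠ (z m).2}
      (fun z => (if z 0 = (v, v) then (1 : ℝ≥0∞) else 0) * Wt (ker G) k z)]
  unfold Z
  refine tsum_congr fun z => ?_
  by_cases hz : z ∈ {z : Fin (k + 1) → V × V | ∀ m : Fin (k + 1), 0 < (m : ℕ) → (z m).1 ≠ (z m).2}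
  · rw [Set.indicator_of_mem hz]
    have hz' : (∀ m : Fin (k + 1), 0 < (m : ℕ) → (z m).1 ≠ (z m).2) := hz
    rw [if_pos hz']
    ring
  · rw [Set.indicator_of_notMem hz]
    have hz' : ¬(∀ m : Fin (k + 1), 0 < (m : ℕ) → (z m).1 ≠ (z m).2) := hz
    rw [if_neg hz']
    ring

lemma Cset_eq (G : SimpleGraph V) [G.LocallyFinite] (u v : V)
    (μ : Measure (ℕ → V × V)) (hμ : IsPairWalkMeasure (step G) u u μ) (n k : ℕ) :
    μ (Cset v n k) = pn G n u v * pn G n u v * Z G v k := by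
  have hT : Cset v n k = {ω : ℕ → V × V | (fun i : Fin (n + k + 1) => ω (i : ℕ)) ∈
      {x : Fin (n + k + 1) → V × V | x ⟨n, by omega⟩ = (v, v) ∧
        ∀ m : Fin (n + k + 1), n < (m : ℕ) → (x m).1 ≠ (x m).2}} := by
    ext ω
    constructor
    · intro hω
      exact ⟨hω.1, fun m hm => hω.2 (m : ℕ) hm (by omega)⟩
    · intro hω
      refine ⟨hω.1, fun m hm hk => hω.2 ⟨m, by omega⟩ hm⟩
  have hms := main_sum G v n (n + k) (by omega) u u
  rw [show n + k - n = k from by omega] at hms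
  have h2 : ∑' c : ↑{x : Fin (n + k + 1) → V × V | x ⟨n, by omega⟩ = (v, v) ∧
        ∀ m : Fin (n + k + 1), n < (m : ℕ) → (x m).1 ≠ (x m).2},
      μ (Cyl (n + k) (c : Fin (n + k + 1) → V × V))
      = ∑' c : ↑{x : Fin (n + k + 1) → V × V | x ⟨n, by omega⟩ = (v, v) ∧
          ∀ m : Fin (n + k + 1), n < (m : ℕ) → (x m).1 ≠ (x m).2},
        ((if (c : Fin (n + k + 1) → V × V) 0 = (u, u) then (1 : ℝ≥0∞) else 0) *
          Wt (ker G) (n + k) (c : Fin (n + k + 1) → V × V)) :=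
    tsum_congr fun c => cyl_measure G u μ hμ (n + k) c
  rw [hT, measure_restrict, h2,
    tsum_subtype {x : Fin (n + k + 1) → V × V | x ⟨n, by omega⟩ = (v, v) ∧
        ∀ m : Fin (n + k + 1), n < (m : ℕ) → (x m).1 ≠ (x m).2}
      (fun x => (if x 0 = (u, u) then (1 : ℝ≥0∞) else 0) * Wt (ker G) (n + k) x), ← hms]
  refine tsum_congr fun x => ?_
  by_cases hx : x ∈ {x : Fin (n + k + 1) → V × V | x ⟨n, by omega⟩ = (v, v) ∧
      ∀ m : Fin (n + k + 1), n < (m : ℕ) → (x m).1 ≠ (x m).2}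
  · rw [Set.indicator_of_mem hx]
    have hx' : x ⟨n, by omega⟩ = (v, v) ∧
        ∀ m : Fin (n + k + 1), n < (m : ℕ) → (x m).1 ≠ (x m).2 := hx
    rw [if_pos hx'.1, if_pos hx'.2]
    ring
  · rw [Set.indicator_of_notMem hx]
    have hx' : ¬(x ⟨n, by omega⟩ = (v, v) ∧
        ∀ m : Fin (n + k + 1), n < (m : ℕ) → (x m).1 ≠ (x m).2) := hx
    by_cases h1 : x ⟨n, by omega⟩ = (v, v)
    · have h2 : ¬(∀ m : Fin (n + k + 1), n < (m : ℕ) → (x m).1 ≠ (x m).2) :=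
        fun h2 => hx' ⟨h1, h2⟩
      rw [if_neg h2]
      ring
    · rw [if_neg h1]
      ring

end Meas

/-- `q_last(u, v) = Σ_{n ≥ 0} p_n(u, v)^2 · q_0(v)`. -/
theorem last_collision_decomposition
    [Countable V] [MeasurableSpace V] [DiscreteMeasurableSpace V]
    (G : SimpleGraph V) [G.LocallyFinite]
    (hconn : G.Connected) (hdeg : ∀ v : V, 0 < G.degree v)
    (μ : V → Measure (ℕ → V × V))
    (hμ : ∀ w : V, IsPairWalkMeasure (step G) w w (μ w))
    (u v : V) :
    μ u (lastCollisionAt v) = ∑' n : ℕ, (pn G n u v) ^ 2 * μ v noCollision := by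
  haveI : IsProbabilityMeasure (μ u) := (hμ u).1
  haveI : IsProbabilityMeasure (μ v) := (hμ v).1
  -- noCollision as a limit of NCset
  have hNCinter : ⋂ k, NCset (V := V) k = noCollision := by
    ext ω
    simp only [Set.mem_iInter, NCset, noCollision, Set.mem_setOf_eq]
    constructor
    · intro h m hm
      exact h m m hm le_rfl
    · intro h k m hm _
      exact h m hm
  have hNCtend : Filter.Tendsto (fun k => μ v (NCset (V := V) k)) Filter.atTop
      (nhds (μ v noCollision)) := by
    have := tendsto_measure_iInter_atTop (μ := μ v) (s := fun k => NCset (V := V) k)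
      (fun k => (measurableSet_NCset k).nullMeasurableSet)
      (fun k k' hkk' ω hω m hm hm' => hω m hm (le_trans hm' hkk'))
      ⟨0, measure_ne_top _ _⟩
    rwa [hNCinter] at this
  -- per-n identity
  have hA : ∀ n : ℕ, μ u (Aset v n) = pn G n u v * pn G n u v * μ v noCollision := by
    intro n
    have hinter : ⋂ k, Cset v n k = Aset v n := by
      ext ω
      simp only [Set.mem_iInter, Cset, Aset, Set.mem_setOf_eq]
      constructor
      · intro h
        exact ⟨(h 0).1, fun m hm => (h m).2 m hm (by omega)⟩
      · intro h k
        exact ⟨h.1, fun m hm _ => h.2 m hm⟩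
    have h1 : Filter.Tendsto (fun k => μ u (Cset v n k)) Filter.atTop
        (nhds (μ u (Aset v n))) := by
      have := tendsto_measure_iInter_atTop (μ := μ u) (s := fun k => Cset v n k)
        (fun k => (measurableSet_Cset v n k).nullMeasurableSet)
        (fun k k' hkk' ω hω => ⟨hω.1, fun m hm hm' => hω.2 m hm (by omega)⟩)
        ⟨0, measure_ne_top _ _⟩
      rwa [hinter] at this
    have h2 : Filter.Tendsto (fun k => μ u (Cset v n k)) Filter.atTop
        (nhds (pn G n u v * pn G n u v * μ v noCollision)) := by
      have heq : (fun k => μ u (Cset v n k))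
          = fun k => pn G n u v * pn G n u v * μ v (NCset (V := V) k) := by
        funext k
        rw [Cset_eq G u v (μ u) (hμ u) n k, NCset_eq_Z G v (μ v) (hμ v) k]
      rw [heq]
      refine ENNReal.Tendsto.const_mul hNCtend (Or.inr ?_)
      exact ne_top_of_le_ne_top (by simp : (1 : ℝ≥0∞) ≠ ⊤)
        (mul_le_one' (pn_le_one G hdeg n u v) (pn_le_one G hdeg n u v))
    exact tendsto_nhds_unique h1 h2
  -- decompose lastCollisionAt as a disjoint union
  have hunion : lastCollisionAt v = ⋃ n : ℕ, Aset v n := by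
    ext ω
    simp [lastCollisionAt, Aset]
  have hdisj : Pairwise (Function.onFun Disjoint fun n => Aset v n) := by
    intro i j hij
    refine Set.disjoint_left.2 fun ω hi hj => ?_
    rcases lt_or_gt_of_ne hij with h | h
    · exact hi.2 j h (by rw [hj.1])
    · exact hj.2 i h (by rw [hi.1])
  rw [hunion, measure_iUnion hdisj fun n => measurableSet_Aset v n]
  refine tsum_congr fun n => ?_
  rw [hA n, pow_two]

end CollisionsStmt
end

section
/- For every vertex u of G, the probability that two independent simple random walks started at u collide at only finitely many times satisfies q_fin(u) = Σ_v Σ_{n≥0} p_n(u, v)^2 · q_0(v), where the sum is over all vertices v of G. -/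
open MeasureTheory
open scoped ENNReal Classical

namespace CollisionsStmt

variable {V : Type*}

/-! ### Auxiliary development -/

/-- The pair (product) kernel. -/
noncomputable def step2 (G : SimpleGraph V) [G.LocallyFinite] (a b : V × V) : ℝ≥0∞ :=
  step G a.1 b.1 * step G a.2 b.2

/-- `n`-step transition probabilities of the pair chain. -/
noncomputable def pn2 (G : SimpleGraph V) [G.LocallyFinite] : ℕ → V × V → V × V → ℝ≥0∞
  | 0, a, b => if a = b then 1 else 0
  | n + 1, a, b => ∑' w, step2 G a w * pn2 G n w b

lemma pn2_eq (G : SimpleGraph V) [G.LocallyFinite] (n : ℕ) (a b : V × V) :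
    pn2 G n a b = pn G n a.1 b.1 * pn G n a.2 b.2 := by
  induction n generalizing a with
  | zero =>
      by_cases h1 : a.1 = b.1 <;> by_cases h2 : a.2 = b.2 <;>
        simp [pn2, pn, Prod.ext_iff, h1, h2]
  | succ n ih =>
      show ∑' w : V × V, step2 G a w * pn2 G n w b = _
      have h : ∀ w : V × V, step2 G a w * pn2 G n w b
          = (step G a.1 w.1 * pn G n w.1 b.1) * (step G a.2 w.2 * pn G n w.2 b.2) := by
        intro w; rw [ih w, step2]; ring
      rw [tsum_congr h, ENNReal.tsum_prod']
      have h2 : ∀ w1 : V,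
          (∑' w2 : V, (step G a.1 w1 * pn G n w1 b.1) * (step G a.2 w2 * pn G n w2 b.2))
            = (step G a.1 w1 * pn G n w1 b.1) * ∑' w2 : V, step G a.2 w2 * pn G n w2 b.2 :=
        fun w1 => ENNReal.tsum_mul_left
      rw [tsum_congr h2, ENNReal.tsum_mul_right]
      rfl

/-- Path weight of a finite path in the pair chain. -/
noncomputable def W (G : SimpleGraph V) [G.LocallyFinite] (n : ℕ)
    (p : Fin (n + 1) → V × V) : ℝ≥0∞ :=
  ∏ i : Fin n, step2 G (p i.castSucc) (p i.succ)

lemma W_cons (G : SimpleGraph V) [G.LocallyFinite] (n : ℕ) (c : V × V)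
    (f : Fin (n + 1) → V × V) :
    W G (n + 1) (Fin.cons c f) = step2 G c (f 0) * W G n f := by
  rw [W, Fin.prod_univ_succ]
  refine congrArg₂ (· * ·) ?_ ?_
  · simp
  · rw [W]
    refine Finset.prod_congr rfl fun i _ => ?_
    rw [← Fin.succ_castSucc, Fin.cons_succ, Fin.cons_succ]

lemma pathsum (G : SimpleGraph V) [G.LocallyFinite] (n : ℕ) (a b : V × V) :
    (∑' p : Fin (n + 1) → V × V,
      if p 0 = a ∧ p (Fin.last n) = b then W G n p else 0) = pn2 G n a b := by
  induction n generalizing a with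
  | zero =>
      rw [tsum_eq_single (fun _ => a : Fin 1 → V × V) ?h]
      · have hw : ∀ c : V × V, W G 0 (fun _ => c : Fin 1 → V × V) = 1 := by
          intro c; rw [W]; simp
        by_cases hab : a = b <;> simp [pn2, hab, hw]
      case h =>
        intro p hp
        rw [if_neg]
        rintro ⟨hp0, -⟩
        exact hp (funext fun i => by rw [Subsingleton.elim i (0 : Fin 1), hp0])
  | succ n ih =>
      rw [← Equiv.tsum_eq (Fin.consEquiv (fun _ : Fin (n + 2) => V × V))
        (fun p : Fin (n + 2) → V × V =>
          if p 0 = a ∧ p (Fin.last (n + 1)) = b then W G (n + 1) p else 0)]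
      rw [ENNReal.tsum_prod']
      have hterm : ∀ (c : V × V) (f : Fin (n + 1) → V × V),
          (if (Fin.consEquiv (fun _ : Fin (n + 2) => V × V)) (c, f) 0 = a ∧
              (Fin.consEquiv (fun _ : Fin (n + 2) => V × V)) (c, f) (Fin.last (n + 1)) = b then
            W G (n + 1) ((Fin.consEquiv (fun _ : Fin (n + 2) => V × V)) (c, f)) else 0)
          = if c = a ∧ f (Fin.last n) = b then step2 G c (f 0) * W G n f else 0 := by
        intro c f
        have hc : (Fin.consEquiv (fun _ : Fin (n + 2) => V × V)) (c, f)
            = (Fin.cons c f : Fin (n + 2) → V × V) := rfl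
        rw [hc]
        have h0 : (Fin.cons c f : Fin (n + 2) → V × V) 0 = c := by simp
        have hl : (Fin.cons c f : Fin (n + 2) → V × V) (Fin.last (n + 1)) = f (Fin.last n) := by
          rw [← Fin.succ_last, Fin.cons_succ]
        rw [h0, hl]
        by_cases hcf : c = a ∧ f (Fin.last n) = b
        · rw [if_pos hcf, if_pos hcf]
          exact W_cons G n c f
        · rw [if_neg hcf, if_neg hcf]
      simp_rw [hterm]
      rw [tsum_eq_single a ?h2]
      case h2 =>
        intro c hc
        rw [ENNReal.tsum_eq_zero]
        intro f
        rw [if_neg (fun h => hc h.1)]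
      show _ = ∑' w, step2 G a w * pn2 G n w b
      have key : ∀ w : V × V, step2 G a w * pn2 G n w b
          = ∑' f : Fin (n + 1) → V × V,
              (if f 0 = w ∧ f (Fin.last n) = b then step2 G a w * W G n f else 0) := by
        intro w
        rw [← ih w, ← ENNReal.tsum_mul_left]
        refine tsum_congr fun f => ?_
        by_cases hf : f 0 = w ∧ f (Fin.last n) = b
        · rw [if_pos hf, if_pos hf]
        · rw [if_neg hf, if_neg hf, mul_zero]
      rw [tsum_congr key, ENNReal.tsum_comm]
      refine tsum_congr fun f => ?_
      rw [tsum_eq_single (f 0) ?h3]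
      · by_cases hf : f (Fin.last n) = b <;> simp [hf]
      case h3 =>
        intro w hw
        rw [if_neg (fun h => hw h.1.symm)]

section Meas

variable [Countable V] [MeasurableSpace V] [DiscreteMeasurableSpace V]

lemma measurable_coord (m : ℕ) (z : V × V) :
    MeasurableSet {ω : ℕ → V × V | ω m = z} := by
  have : {ω : ℕ → V × V | ω m = z} = (fun ω : ℕ → V × V => ω m) ⁻¹' {z} := by ext ω; simp
  rw [this]
  exact (measurable_pi_apply m) (measurableSet_singleton z)

lemma measurable_noncoll (m : ℕ) :
    MeasurableSet {ω : ℕ → V × V | (ω m).1 ≠ (ω m).2} := by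
  have : {ω : ℕ → V × V | (ω m).1 ≠ (ω m).2}
      = (fun ω : ℕ → V × V => ω m) ⁻¹' {p : V × V | p.1 ≠ p.2} := rfl
  rw [this]
  exact (measurable_pi_apply m) ((Set.to_countable _).measurableSet)

/-- The basic cylinder-decomposition lemma. -/
lemma measure_eq_tsum_cyl (G : SimpleGraph V) [G.LocallyFinite]
    (μ : Measure (ℕ → V × V)) (w : V)
    (hμ : IsPairWalkMeasure (step G) w w μ)
    {ι : Type*} [Countable ι] (E : ι → ℕ → V × V) (N : ℕ)
    (hinj : ∀ a b : ι, (∀ i ≤ N, E a i = E b i) → a = b)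
    (hsurj : ∀ ω : ℕ → V × V, ∃ a : ι, ∀ i ≤ N, E a i = ω i)
    (T : Set (ℕ → V × V))
    (hdet : ∀ ω ω' : ℕ → V × V, (∀ i ≤ N, ω i = ω' i) → ω ∈ T → ω' ∈ T) :
    μ T = ∑' a : ι,
      if E a ∈ T then
        (if E a 0 = (w, w) then (1 : ℝ≥0∞) else 0) *
          ∏ i ∈ Finset.range N, step2 G (E a i) (E a (i + 1))
      else 0 := by
  classical
  set D : ι → Set (ℕ → V × V) := fun a =>
    if E a ∈ T then {ω | ∀ i ≤ N, ω i = E a i} else ∅ with hD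
  have hmeas : ∀ x : ℕ → V × V, MeasurableSet {ω : ℕ → V × V | ∀ i ≤ N, ω i = x i} := by
    intro x
    have : {ω : ℕ → V × V | ∀ i ≤ N, ω i = x i}
        = ⋂ i, ⋂ (_ : i ≤ N), {ω : ℕ → V × V | ω i = x i} := by
      ext ω; simp
    rw [this]
    exact MeasurableSet.iInter fun i => MeasurableSet.iInter fun _ => measurable_coord i (x i)
  have hDmeas : ∀ a, MeasurableSet (D a) := by
    intro a; rw [hD]; dsimp only
    split_ifs
    · exact hmeas _
    · exact MeasurableSet.empty
  have hdisj : Pairwise (Function.onFun Disjoint D) := by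
    intro a b hab
    rw [Function.onFun, Set.disjoint_left]
    intro ω hωa hωb
    rw [hD] at hωa hωb; dsimp only at hωa hωb
    split_ifs at hωa hωb
    · exact hab (hinj a b fun i hi => ((hωa i hi).symm.trans (hωb i hi)))
    · exact hωb
    · exact hωa
    · exact hωa
  have hcover : T = ⋃ a, D a := by
    ext ω
    constructor
    · intro hω
      obtain ⟨a, ha⟩ := hsurj ω
      have haT : E a ∈ T := hdet ω (E a) (fun i hi => (ha i hi).symm) hω
      refine Set.mem_iUnion.2 ⟨a, ?_⟩
      rw [hD]; dsimp only; rw [if_pos haT]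
      exact fun i hi => (ha i hi).symm
    · intro hω
      obtain ⟨a, ha⟩ := Set.mem_iUnion.1 hω
      rw [hD] at ha; dsimp only at ha
      split_ifs at ha with h
      · exact hdet (E a) ω (fun i hi => (ha i hi).symm) h
      · exact ha.elim
  calc μ T = μ (⋃ a, D a) := by rw [← hcover]
    _ = ∑' a, μ (D a) := measure_iUnion hdisj hDmeas
    _ = _ := by
        refine tsum_congr fun a => ?_
        by_cases h : E a ∈ T
        · rw [if_pos h, hD]; dsimp only; rw [if_pos h]
          exact hμ.2 N (E a)
        · rw [if_neg h, hD]; dsimp only; rw [if_neg h, measure_empty]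

end Meas

/-- The events used for the finite-horizon approximations. -/
def NCk (k : ℕ) : Set (ℕ → V × V) := {ω | ∀ m, 1 ≤ m → m ≤ k → (ω m).1 ≠ (ω m).2}

def Bk (n k : ℕ) (v : V) : Set (ℕ → V × V) :=
  {ω | ω n = (v, v) ∧ ∀ m, n < m → m ≤ n + k → (ω m).1 ≠ (ω m).2}

def Bset (n : ℕ) (v : V) : Set (ℕ → V × V) :=
  {ω | ω n = (v, v) ∧ ∀ m, n < m → (ω m).1 ≠ (ω m).2}

/-- Canonical extension of a "suffix" path to all of `ℕ`. -/
def F (v : V) (k : ℕ) (s : Fin k → V × V) : ℕ → V × V := fun i =>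
  if h : 1 ≤ i ∧ i ≤ k then s ⟨i - 1, by omega⟩ else (v, v)

lemma F_zero (v : V) (k : ℕ) (s : Fin k → V × V) : F v k s 0 = (v, v) := by
  rw [F, dif_neg]; omega

lemma F_pos (v : V) (k : ℕ) (s : Fin k → V × V) {i : ℕ} (h1 : 1 ≤ i) (h2 : i ≤ k) :
    F v k s i = s ⟨i - 1, by omega⟩ := by
  rw [F, dif_pos ⟨h1, h2⟩]

lemma F_large (v : V) (k : ℕ) (s : Fin k → V × V) {i : ℕ} (h : ¬ i ≤ k) :
    F v k s i = (v, v) := by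
  rw [F, dif_neg]; omega

lemma mem_NCk_F (v : V) (k : ℕ) (s : Fin k → V × V) :
    F v k s ∈ NCk (V := V) k ↔ ∀ j : Fin k, (s j).1 ≠ (s j).2 := by
  constructor
  · intro h j
    have h1 := h (j.val + 1) (by omega) (by omega)
    have hj : (⟨j.val + 1 - 1, by omega⟩ : Fin k) = j := by
      apply Fin.ext; simp only [Fin.val_mk]; omega
    rwa [F_pos v k s (by omega) (by omega), hj] at h1
  · intro h m h1 h2
    rw [F_pos v k s h1 h2]
    exact h _

/-- The partial sums appearing in the measures of the approximations. -/
noncomputable def sSum (G : SimpleGraph V) [G.LocallyFinite] (v : V) (k : ℕ) : ℝ≥0∞ :=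
  ∑' s : Fin k → V × V,
    if ∀ j : Fin k, (s j).1 ≠ (s j).2 then
      ∏ i ∈ Finset.range k, step2 G (F v k s i) (F v k s (i + 1))
    else 0

lemma sSum_zero (G : SimpleGraph V) [G.LocallyFinite] (v : V) : sSum G v 0 = 1 := by
  rw [sSum, tsum_eq_single (fun j : Fin 0 => j.elim0)]
  · rw [if_pos (fun j => j.elim0), Finset.prod_range_zero]
  · intro s hs
    exact absurd (funext fun j => j.elim0) hs

section Meas2

variable [Countable V] [MeasurableSpace V] [DiscreteMeasurableSpace V]

/-- Index extension for the `NCk` decomposition. -/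
def ENC (k : ℕ) (x : (V × V) × (Fin k → V × V)) : ℕ → V × V := fun i =>
  if h0 : i = 0 then x.1 else if h : i ≤ k then x.2 ⟨i - 1, by omega⟩ else x.1

lemma ENC_zero (k : ℕ) (x : (V × V) × (Fin k → V × V)) : ENC k x 0 = x.1 := by
  simp [ENC]

lemma ENC_pos (k : ℕ) (x : (V × V) × (Fin k → V × V)) {i : ℕ} (h1 : 1 ≤ i) (h2 : i ≤ k) :
    ENC k x i = x.2 ⟨i - 1, by omega⟩ := by
  rw [ENC]; rw [dif_neg (by omega), dif_pos h2]

lemma ENC_large (k : ℕ) (x : (V × V) × (Fin k → V × V)) {i : ℕ} (h1 : 1 ≤ i) (h2 : ¬ i ≤ k) :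
    ENC k x i = x.1 := by
  rw [ENC]; rw [dif_neg (by omega), dif_neg h2]

lemma ENC_eq_F (v : V) (k : ℕ) (s : Fin k → V × V) : ENC k ((v, v), s) = F v k s := by
  funext i
  by_cases h0 : i = 0
  · subst h0; rw [ENC_zero, F_zero]
  · by_cases hk : i ≤ k
    · rw [ENC_pos k _ (by omega) hk, F_pos v k s (by omega) hk]
    · rw [ENC_large k _ (by omega) hk, F_large v k s hk]

lemma measure_NCk (G : SimpleGraph V) [G.LocallyFinite]
    (μ : Measure (ℕ → V × V)) (v : V) (hμ : IsPairWalkMeasure (step G) v v μ) (k : ℕ) :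
    μ (NCk (V := V) k) = sSum G v k := by
  have hdec := measure_eq_tsum_cyl G μ v hμ (ENC k) k ?hinj ?hsurj (NCk (V := V) k) ?hdet
  case hinj =>
    intro x y hagree
    have h1 : x.1 = y.1 := by
      have := hagree 0 (Nat.zero_le k)
      rwa [ENC_zero, ENC_zero] at this
    have h2 : x.2 = y.2 := by
      funext j
      have := hagree (j.val + 1) (by omega)
      rw [ENC_pos k x (by omega) (by omega), ENC_pos k y (by omega) (by omega)] at this
      simpa [show j.val + 1 - 1 = j.val by omega] using this
    exact Prod.ext h1 h2
  case hsurj =>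
    intro ω
    refine ⟨(ω 0, fun j => ω (j.val + 1)), fun i hi => ?_⟩
    by_cases h0 : i = 0
    · subst h0; rw [ENC_zero]
    · rw [ENC_pos k _ (by omega) hi]
      show ω (i - 1 + 1) = ω i
      congr 1
      omega
  case hdet =>
    intro ω ω' hag hω m h1 h2
    rw [← hag m h2]
    exact hω m h1 h2
  rw [hdec, ENNReal.tsum_prod']
  rw [tsum_eq_single (v, v) ?hside]
  case hside =>
    intro c hc
    rw [ENNReal.tsum_eq_zero]
    intro s
    rw [ENC_zero]
    split_ifs <;> simp_all
  refine tsum_congr fun s => ?_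
  simp [ENC_eq_F, mem_NCk_F v k s, F_zero]

/-- Index extension for the `Bk` decomposition. -/
def EB (n k : ℕ) (x : (Fin (n + 1) → V × V) × (Fin k → V × V)) : ℕ → V × V := fun i =>
  if h : i ≤ n then x.1 ⟨i, by omega⟩
  else if h2 : i ≤ n + k then x.2 ⟨i - n - 1, by omega⟩
  else x.1 ⟨n, by omega⟩

lemma EB_le (n k : ℕ) (x : (Fin (n + 1) → V × V) × (Fin k → V × V)) {i : ℕ} (h : i ≤ n) :
    EB n k x i = x.1 ⟨i, by omega⟩ := by
  rw [EB, dif_pos h]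

lemma EB_mid (n k : ℕ) (x : (Fin (n + 1) → V × V) × (Fin k → V × V)) {i : ℕ}
    (h1 : n < i) (h2 : i ≤ n + k) :
    EB n k x i = x.2 ⟨i - n - 1, by omega⟩ := by
  rw [EB, dif_neg (by omega), dif_pos h2]

lemma measure_Bk (G : SimpleGraph V) [G.LocallyFinite]
    (μ : Measure (ℕ → V × V)) (u : V) (hμ : IsPairWalkMeasure (step G) u u μ)
    (n k : ℕ) (v : V) :
    μ (Bk n k v) = pn2 G n (u, u) (v, v) * sSum G v k := by
  have hdec := measure_eq_tsum_cyl G μ u hμ (EB n k) (n + k) ?hinj ?hsurj (Bk n k v) ?hdet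
  case hinj =>
    intro x y hagree
    have h1 : x.1 = y.1 := by
      funext j
      have := hagree j.val (by omega)
      rw [EB_le n k x (by omega), EB_le n k y (by omega)] at this
      simpa using this
    have h2 : x.2 = y.2 := by
      funext j
      have := hagree (n + 1 + j.val) (by omega)
      rw [EB_mid n k x (by omega) (by omega), EB_mid n k y (by omega) (by omega)] at this
      simpa [show n + 1 + j.val - n - 1 = j.val by omega] using this
    exact Prod.ext h1 h2
  case hsurj =>
    intro ω
    refine ⟨(fun j => ω j.val, fun j => ω (n + 1 + j.val)), fun i hi => ?_⟩
    by_cases h : i ≤ n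
    · rw [EB_le n k _ h]
    · rw [EB_mid n k _ (by omega) hi]
      show ω (n + 1 + (i - n - 1)) = ω i
      congr 1
      omega
  case hdet =>
    intro ω ω' hag hω
    refine ⟨?_, fun m h1 h2 => ?_⟩
    · rw [← hag n (by omega)]
      exact hω.1
    · rw [← hag m h2]
      exact hω.2 m h1 h2
  rw [hdec, ENNReal.tsum_prod']
  have hterm : ∀ (q : Fin (n + 1) → V × V) (s : Fin k → V × V),
      (if EB n k (q, s) ∈ Bk n k v then
        (if EB n k (q, s) 0 = (u, u) then (1 : ℝ≥0∞) else 0) *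
          ∏ i ∈ Finset.range (n + k), step2 G (EB n k (q, s) i) (EB n k (q, s) (i + 1))
      else 0)
      = (if q 0 = (u, u) ∧ q (Fin.last n) = (v, v) then W G n q else 0) *
        (if ∀ j : Fin k, (s j).1 ≠ (s j).2 then
          ∏ i ∈ Finset.range k, step2 G (F v k s i) (F v k s (i + 1)) else 0) := by
    intro q s
    have hzero : EB n k (q, s) 0 = q 0 := by
      rw [EB_le n k _ (Nat.zero_le n)]
      simp
    have hlast : EB n k (q, s) n = q (Fin.last n) := by
      rw [EB_le n k _ (le_refl n)]
      rfl
    have hmem : EB n k (q, s) ∈ Bk n k v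
        ↔ (q (Fin.last n) = (v, v) ∧ ∀ j : Fin k, (s j).1 ≠ (s j).2) := by
      constructor
      · rintro ⟨h1, h2⟩
        refine ⟨by rwa [hlast] at h1, fun j => ?_⟩
        have := h2 (n + 1 + j.val) (by omega) (by omega)
        have hj : (⟨n + 1 + j.val - n - 1, by omega⟩ : Fin k) = j := by
          apply Fin.ext; simp only [Fin.val_mk]; omega
        rwa [EB_mid n k _ (by omega) (by omega), hj] at this
      · rintro ⟨h1, h2⟩
        refine ⟨by rwa [hlast], fun m hm1 hm2 => ?_⟩
        rw [EB_mid n k _ hm1 hm2]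
        exact h2 _
    have hprod1 : ∏ i ∈ Finset.range n, step2 G (EB n k (q, s) i) (EB n k (q, s) (i + 1))
        = W G n q := by
      rw [Finset.prod_range (fun i => step2 G (EB n k (q, s) i) (EB n k (q, s) (i + 1))), W]
      refine Finset.prod_congr rfl fun i _ => ?_
      rw [EB_le n k _ (by omega), EB_le n k _ (by omega : i.val + 1 ≤ n)]
      congr 1
    have hprod2 : q (Fin.last n) = (v, v) →
        ∏ i ∈ Finset.range k, step2 G (EB n k (q, s) (n + i)) (EB n k (q, s) (n + i + 1))
        = ∏ i ∈ Finset.range k, step2 G (F v k s i) (F v k s (i + 1)) := by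
      intro hq
      refine Finset.prod_congr rfl fun i hi => ?_
      rw [Finset.mem_range] at hi
      have harg2 : EB n k (q, s) (n + i + 1) = F v k s (i + 1) := by
        rw [EB_mid n k _ (by omega) (by omega), F_pos v k s (by omega) (by omega)]
        exact congrArg s (by apply Fin.ext; simp only [Fin.val_mk]; omega)
      have harg1 : EB n k (q, s) (n + i) = F v k s i := by
        by_cases h0 : i = 0
        · subst h0
          rw [show n + 0 = n from rfl, hlast, hq, F_zero]
        · rw [EB_mid n k _ (by omega) (by omega), F_pos v k s (by omega) (by omega)]
          exact congrArg s (by apply Fin.ext; simp only [Fin.val_mk]; omega)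
      rw [harg1, harg2]
    rw [Finset.prod_range_add]
    by_cases hql : q (Fin.last n) = (v, v)
    · by_cases hs : ∀ j : Fin k, (s j).1 ≠ (s j).2
      · rw [if_pos (hmem.2 ⟨hql, hs⟩), if_pos hs, hzero, hprod1, hprod2 hql]
        by_cases hq0 : q 0 = (u, u)
        · rw [if_pos hq0, if_pos ⟨hq0, hql⟩, one_mul]
        · rw [if_neg hq0, if_neg (fun h => hq0 h.1), zero_mul, zero_mul]
      · rw [if_neg (fun h => hs (hmem.1 h).2), if_neg hs, mul_zero]
    · rw [if_neg (fun h => hql (hmem.1 h).1), if_neg (fun h => hql h.2), zero_mul]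
  have : ∀ q : Fin (n + 1) → V × V, (∑' s : Fin k → V × V,
      (if EB n k (q, s) ∈ Bk n k v then
        (if EB n k (q, s) 0 = (u, u) then (1 : ℝ≥0∞) else 0) *
          ∏ i ∈ Finset.range (n + k), step2 G (EB n k (q, s) i) (EB n k (q, s) (i + 1))
      else 0))
      = (if q 0 = (u, u) ∧ q (Fin.last n) = (v, v) then W G n q else 0) * sSum G v k := by
    intro q
    rw [sSum, ← ENNReal.tsum_mul_left]
    exact tsum_congr fun s => hterm q s
  rw [tsum_congr this, ENNReal.tsum_mul_right, pathsum]

end Meas2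

section Meas3

variable [Countable V] [MeasurableSpace V] [DiscreteMeasurableSpace V]

lemma measurable_NCk (k : ℕ) : MeasurableSet (NCk (V := V) k) := by
  have : NCk (V := V) k = ⋂ m, ⋂ (_ : 1 ≤ m), ⋂ (_ : m ≤ k),
      {ω : ℕ → V × V | (ω m).1 ≠ (ω m).2} := by
    ext ω; simp [NCk]
  rw [this]
  exact MeasurableSet.iInter fun m => MeasurableSet.iInter fun _ =>
    MeasurableSet.iInter fun _ => measurable_noncoll m

lemma measurable_Bk (n k : ℕ) (v : V) : MeasurableSet (Bk n k v) := by
  have : Bk n k v = {ω : ℕ → V × V | ω n = (v, v)} ∩ ⋂ m, ⋂ (_ : n < m), ⋂ (_ : m ≤ n + k),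
      {ω : ℕ → V × V | (ω m).1 ≠ (ω m).2} := by
    ext ω; simp [Bk]
  rw [this]
  exact (measurable_coord n (v, v)).inter
    (MeasurableSet.iInter fun m => MeasurableSet.iInter fun _ =>
      MeasurableSet.iInter fun _ => measurable_noncoll m)

lemma measurable_Bset (n : ℕ) (v : V) : MeasurableSet (Bset n v) := by
  have : Bset n v = {ω : ℕ → V × V | ω n = (v, v)} ∩ ⋂ m, ⋂ (_ : n < m),
      {ω : ℕ → V × V | (ω m).1 ≠ (ω m).2} := by
    ext ω; simp [Bset]
  rw [this]
  exact (measurable_coord n (v, v)).inter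
    (MeasurableSet.iInter fun m => MeasurableSet.iInter fun _ => measurable_noncoll m)

lemma measure_noCollision_eq (G : SimpleGraph V) [G.LocallyFinite]
    (μ : Measure (ℕ → V × V)) (v : V) (hμ : IsPairWalkMeasure (step G) v v μ) :
    μ (noCollision (V := V)) = ⨅ k, μ (NCk (V := V) k) := by
  haveI := hμ.1
  have hint : noCollision (V := V) = ⋂ k, NCk (V := V) k := by
    ext ω
    constructor
    · intro h
      exact Set.mem_iInter.2 fun k m h1 h2 => h m h1
    · intro h m h1
      exact Set.mem_iInter.1 h m m h1 le_rfl
  rw [hint]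
  refine Antitone.measure_iInter (fun k k' hk ω hω m h1 h2 => hω m h1 (h2.trans hk)) ?_ ?_
  · exact fun k => (measurable_NCk k).nullMeasurableSet
  · exact ⟨0, measure_ne_top _ _⟩

lemma measure_Bset_eq (G : SimpleGraph V) [G.LocallyFinite]
    (μ : V → Measure (ℕ → V × V))
    (hμ : ∀ w : V, IsPairWalkMeasure (step G) w w (μ w)) (u v : V) (n : ℕ) :
    μ u (Bset n v) = pn2 G n (u, u) (v, v) * μ v (noCollision (V := V)) := by
  haveI := (hμ u).1
  have hint : Bset n v = ⋂ k, Bk n k v := by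
    ext ω
    constructor
    · intro h
      exact Set.mem_iInter.2 fun k => ⟨h.1, fun m h1 h2 => h.2 m h1⟩
    · intro h
      refine ⟨(Set.mem_iInter.1 h 0).1, fun m h1 => ?_⟩
      exact (Set.mem_iInter.1 h (m - n)).2 m h1 (by omega)
  have hBk : ∀ k, μ u (Bk n k v) = pn2 G n (u, u) (v, v) * μ v (NCk (V := V) k) := by
    intro k
    rw [measure_Bk G (μ u) u (hμ u) n k v, measure_NCk G (μ v) v (hμ v) k]
  have hne : pn2 G n (u, u) (v, v) ≠ ∞ := by
    have h0 : μ u (Bk n 0 v) = pn2 G n (u, u) (v, v) := by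
      rw [hBk 0, measure_NCk G (μ v) v (hμ v) 0, sSum_zero, mul_one]
    rw [← h0]
    exact measure_ne_top _ _
  have hanti : Antitone (fun k => Bk n k v) := by
    intro k k' hk ω hω
    exact ⟨hω.1, fun m h1 h2 => hω.2 m h1 (h2.trans (by omega))⟩
  rw [hint]
  rw [Antitone.measure_iInter hanti
    (fun k => (measurable_Bk n k v).nullMeasurableSet) ⟨0, measure_ne_top _ _⟩]
  have : ∀ k, μ u (Bk n k v) = pn2 G n (u, u) (v, v) * μ v (NCk (V := V) k) := hBk
  rw [iInf_congr this, ← ENNReal.mul_iInf (fun h => (hne h).elim),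
    ← measure_noCollision_eq G (μ v) v (hμ v)]

end Meas3


/-- `q_fin(u) = Σ_v Σ_{n ≥ 0} p_n(u, v)^2 · q_0(v)`. -/
theorem finitely_many_collisions_decomposition
    [Countable V] [MeasurableSpace V] [DiscreteMeasurableSpace V]
    (G : SimpleGraph V) [G.LocallyFinite]
    (hconn : G.Connected) (hdeg : ∀ v : V, 0 < G.degree v)
    (μ : V → Measure (ℕ → V × V))
    (hμ : ∀ w : V, IsPairWalkMeasure (step G) w w (μ w))
    (u : V) :
    μ u finCollisions = ∑' v : V, ∑' n : ℕ, (pn G n u v) ^ 2 * μ v noCollision := by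
  classical
  haveI : IsProbabilityMeasure (μ u) := (hμ u).1
  set E0 : Set (ℕ → V × V) := {ω | ω 0 = (u, u)} with hE0def
  have hE0meas : MeasurableSet E0 := measurable_coord 0 (u, u)
  have hE01 : μ u E0 = 1 := by
    have h := (hμ u).2 0 (fun _ => (u, u))
    have hset : {ω : ℕ → V × V | ∀ i ≤ 0, ω i = (fun _ => (u, u) : ℕ → V × V) i} = E0 := by
      ext ω
      constructor
      · intro hω
        exact hω 0 le_rfl
      · intro hω i hi
        rw [Nat.le_zero] at hi
        subst hi
        exact hω
    rw [hset] at h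
    rw [h, if_pos rfl, Finset.prod_range_zero, mul_one]
  have hE0c : μ u E0ᶜ = 0 := by
    rw [measure_compl hE0meas (measure_ne_top _ _), hE01, measure_univ, tsub_self]
  -- the key disjointness property
  have key : ∀ (v1 : V) (n1 : ℕ) (v2 : V) (n2 : ℕ) (ω : ℕ → V × V),
      ω ∈ Bset n1 v1 → ω ∈ Bset n2 v2 → v1 = v2 ∧ n1 = n2 := by
    intro v1 n1 v2 n2 ω h1 h2
    rcases lt_trichotomy n1 n2 with h | h | h
    · exact absurd (by rw [h2.1] : (ω n2).1 = (ω n2).2) (h1.2 n2 h)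
    · subst h
      have := h1.1.symm.trans h2.1
      rw [Prod.mk.injEq] at this
      exact ⟨this.1, rfl⟩
    · exact absurd (by rw [h1.1] : (ω n1).1 = (ω n1).2) (h2.2 n1 h)
  -- covering
  have hBsub : ∀ (n : ℕ) (v : V), Bset n v ⊆ finCollisions := by
    intro n v ω hω
    refine Set.Finite.subset (Set.finite_Iic n) fun m hm => ?_
    by_contra hgt
    exact hω.2 m (by simpa using hgt) hm
  have hcov : finCollisions ∩ E0 ⊆ ⋃ v, ⋃ n, Bset n v := by
    rintro ω ⟨hfin, h0⟩
    have h0' : 0 ∈ {m : ℕ | (ω m).1 = (ω m).2} := by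
      show (ω 0).1 = (ω 0).2
      rw [show ω 0 = (u, u) from h0]
    have h0F : 0 ∈ hfin.toFinset := hfin.mem_toFinset.2 h0'
    set n := hfin.toFinset.max' ⟨0, h0F⟩ with hn
    have hnF : n ∈ hfin.toFinset := hfin.toFinset.max'_mem _
    have hncoll : (ω n).1 = (ω n).2 := hfin.mem_toFinset.1 hnF
    refine Set.mem_iUnion.2 ⟨(ω n).1, Set.mem_iUnion.2 ⟨n, ?_, ?_⟩⟩
    · exact Prod.ext rfl hncoll.symm
    · intro m hmn hcoll
      exact absurd (hfin.toFinset.le_max' m (hfin.mem_toFinset.2 hcoll)) (by omega)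
  have hμeq : μ u finCollisions = μ u (⋃ v, ⋃ n, Bset n v) := by
    refine le_antisymm ?_ (measure_mono (Set.iUnion_subset fun v => Set.iUnion_subset fun n =>
      hBsub n v))
    calc μ u finCollisions ≤ μ u ((finCollisions ∩ E0) ∪ E0ᶜ) := by
          refine measure_mono fun ω hω => ?_
          by_cases h : ω ∈ E0
          · exact Or.inl ⟨hω, h⟩
          · exact Or.inr h
      _ ≤ μ u (finCollisions ∩ E0) + μ u E0ᶜ := measure_union_le _ _
      _ = μ u (finCollisions ∩ E0) := by rw [hE0c, add_zero]
      _ ≤ μ u (⋃ v, ⋃ n, Bset n v) := measure_mono hcov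
  rw [hμeq]
  have hdisjV : Pairwise (Function.onFun Disjoint (fun v : V => ⋃ n, Bset n v)) := by
    intro a b hab
    rw [Function.onFun, Set.disjoint_left]
    intro ω hωa hωb
    obtain ⟨na, hna⟩ := Set.mem_iUnion.1 hωa
    obtain ⟨nb, hnb⟩ := Set.mem_iUnion.1 hωb
    exact hab (key a na b nb ω hna hnb).1
  rw [measure_iUnion hdisjV fun v =>
    MeasurableSet.iUnion fun n => measurable_Bset n v]
  refine tsum_congr fun v => ?_
  have hdisjN : Pairwise (Function.onFun Disjoint (fun n => Bset n v)) := by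
    intro a b hab
    rw [Function.onFun, Set.disjoint_left]
    intro ω hωa hωb
    exact hab (key v a v b ω hωa hωb).2
  rw [measure_iUnion hdisjN fun n => measurable_Bset n v]
  refine tsum_congr fun n => ?_
  rw [measure_Bset_eq G μ hμ u v n, pn2_eq, sq]
end CollisionsStmt
end
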